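/- With f_m^n(θ) = ∏_{j=m+1}^n(1-θ/j) and m ≥ θ fixed, the coefficient of Q^i in the expansion ∏_{j=m+1}^n((1-θ/j)I + (θ/j)Q), namely [Q^i]_n = θ^i f_m^n(θ) ∑_{m<j_1<⋯<j_i≤n} ∏_{l=1}^i 1/(j_l - θ), tends to 0 as n → ∞ for each fixed i ≥ 0; moreover ∑_{i=0}^{n-m} [Q^i]_n = 1 for all n. -/

import Mathlib

open Filter

/-- Elementary symmetric sum bound: the sum of products over `i`-subsets is at most
the `i`-th power of the sum, for nonnegative entries. -/
lemma esymm_le_pow_aux (a : ℕ → ℝ) (t : Finset ℕ) :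
    ∀ i : ℕ, (∀ l ∈ t, 0 ≤ a l) →
      ∑ s ∈ Finset.powersetCard i t, ∏ l ∈ s, a l ≤ (∑ l ∈ t, a l) ^ i := by
  classical
  induction t using Finset.induction_on with
  | empty =>
      intro i _
      cases i with
      | zero => simp
      | succ i =>
          rw [Finset.powersetCard_eq_empty.mpr (by simp)]
          simp
  | @insert x t hx ih =>
      intro i ha
      have hax : 0 ≤ a x := ha x (Finset.mem_insert_self x t)
      have ha' : ∀ l ∈ t, 0 ≤ a l := fun l hl => ha l (Finset.mem_insert_of_mem hl)
      have hS : 0 ≤ ∑ l ∈ t, a l := Finset.sum_nonneg ha'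
      rw [Finset.sum_insert hx]
      cases i with
      | zero => simp
      | succ i =>
          rw [Finset.powersetCard_succ_insert hx, Finset.sum_union (by
            rw [Finset.disjoint_left]
            intro s hs1 hs2
            obtain ⟨s', hs', rfl⟩ := Finset.mem_image.mp hs2
            exact hx ((Finset.mem_powersetCard.mp hs1).1 (Finset.mem_insert_self x s')))]
          have himg : ∑ s ∈ (Finset.powersetCard i t).image (insert x), ∏ l ∈ s, a l
              = ∑ s ∈ Finset.powersetCard i t, a x * ∏ l ∈ s, a l := by
            rw [Finset.sum_image]
            · refine Finset.sum_congr rfl fun s hs => ?_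
              have hxs : x ∉ s := fun hxs => hx ((Finset.mem_powersetCard.mp hs).1 hxs)
              rw [Finset.prod_insert hxs]
            · intro s1 h1 s2 h2 h
              have hx1 : x ∉ s1 := fun hxs => hx ((Finset.mem_powersetCard.mp h1).1 hxs)
              have hx2 : x ∉ s2 := fun hxs => hx ((Finset.mem_powersetCard.mp h2).1 hxs)
              have := congrArg (Finset.erase · x) h
              simpa [Finset.erase_insert, hx1, hx2] using this
          rw [himg, ← Finset.mul_sum]
          have h1 := ih (i+1) ha'
          have h2 := ih i ha'
          have h2' : a x * ∑ s ∈ Finset.powersetCard i t, ∏ l ∈ s, a l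
              ≤ a x * (∑ l ∈ t, a l) ^ i := mul_le_mul_of_nonneg_left h2 hax
          have hbig : (∑ l ∈ t, a l) ^ i ≤ (a x + ∑ l ∈ t, a l) ^ i :=
            pow_le_pow_left₀ hS (le_add_of_nonneg_left hax) i
          have hpow : (∑ l ∈ t, a l) ^ (i+1) + a x * (∑ l ∈ t, a l) ^ i
              ≤ (a x + ∑ l ∈ t, a l) ^ (i+1) := by
            calc (∑ l ∈ t, a l) ^ (i+1) + a x * (∑ l ∈ t, a l) ^ i
                = (a x + ∑ l ∈ t, a l) * (∑ l ∈ t, a l) ^ i := by ring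
              _ ≤ (a x + ∑ l ∈ t, a l) * (a x + ∑ l ∈ t, a l) ^ i := by
                  exact mul_le_mul_of_nonneg_left hbig (by positivity)
              _ = (a x + ∑ l ∈ t, a l) ^ (i+1) := by ring
          linarith

/-- Telescoping sum over an `Ico`. -/
lemma telescope_aux (F : ℕ → ℝ) {a b : ℕ} (h : a ≤ b) :
    ∑ j ∈ Finset.Ico a b, (F (j+1) - F j) = F b - F a := by
  rw [Finset.sum_Ico_eq_sub _ h, Finset.sum_range_sub, Finset.sum_range_sub]
  ring

/-- Telescoping sum of logarithms. -/
lemma telescope_log (r : ℝ) (a b : ℕ) (h : a ≤ b) :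
    ∑ j ∈ Finset.Ico a b, (Real.log ((j:ℝ) + 1 - r) - Real.log ((j:ℝ) - r))
      = Real.log ((b:ℝ) - r) - Real.log ((a:ℝ) - r) := by
  have := telescope_aux (fun j : ℕ => Real.log ((j:ℝ) - r)) h
  push_cast at this
  convert this using 1

theorem stmt14 (θ : ℝ) (hθ : 0 < θ) (m : ℕ) (hm : θ ≤ (m:ℝ))
    (c : ℕ → ℕ → ℝ)
    (hc : ∀ i n, c i n = θ ^ i * (∏ j ∈ Finset.Icc (m+1) n, (1 - θ / (j:ℝ))) *
        ∑ s ∈ Finset.powersetCard i (Finset.Icc (m+1) n), ∏ l ∈ s, ((l:ℝ) - θ)⁻¹) :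
    (∀ i, Tendsto (fun n => c i n) atTop (nhds 0)) ∧
    (∀ n, m ≤ n → ∑ i ∈ Finset.range (n - m + 1), c i n = 1) := by
  have hsub : ∀ n : ℕ, ∀ l ∈ Finset.Icc (m+1) n, θ + 1 ≤ (l:ℝ) := by
    intro n l hl
    have h1 : m + 1 ≤ l := (Finset.mem_Icc.mp hl).1
    have h2 : (m:ℝ) + 1 ≤ (l:ℝ) := by exact_mod_cast h1
    linarith
  have hfac_nonneg : ∀ n : ℕ, ∀ j ∈ Finset.Icc (m+1) n, 0 ≤ 1 - θ / (j:ℝ) := by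
    intro n j hj
    have h1 := hsub n j hj
    have hj0 : (0:ℝ) < j := by linarith
    have : θ / (j:ℝ) ≤ 1 := by
      rw [div_le_one hj0]; linarith
    linarith
  have hf_nonneg : ∀ n : ℕ, 0 ≤ ∏ j ∈ Finset.Icc (m+1) n, (1 - θ / (j:ℝ)) :=
    fun n => Finset.prod_nonneg (hfac_nonneg n)
  have hinv_nonneg : ∀ n : ℕ, ∀ l ∈ Finset.Icc (m+1) n, 0 ≤ ((l:ℝ) - θ)⁻¹ := by
    intro n l hl
    have h1 := hsub n l hl
    have : (0:ℝ) < (l:ℝ) - θ := by linarith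
    positivity
  constructor
  · -- part 1 : each coefficient tends to 0
    intro i
    have hL_nonneg : ∀ n : ℕ, 0 ≤ Real.log ((n:ℝ) + 1) := by
      intro n
      apply Real.log_nonneg
      have : (0:ℝ) ≤ (n:ℝ) := Nat.cast_nonneg n
      linarith
    -- bound on the product
    have hf_le : ∀ n : ℕ, (∏ j ∈ Finset.Icc (m+1) n, (1 - θ / (j:ℝ)))
        ≤ Real.exp (θ * Real.log ((m:ℝ)+1) - θ * Real.log ((n:ℝ)+1)) := by
      intro n
      have hsumlog : Real.log ((n:ℝ)+1) - Real.log ((m:ℝ)+1)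
          ≤ ∑ j ∈ Finset.Icc (m+1) n, ((j:ℝ))⁻¹ := by
        by_cases hmn : m ≤ n
        · have hIcc : Finset.Icc (m+1) n = Finset.Ico (m+1) (n+1) := by
            rw [Finset.Ico_add_one_right_eq_Icc]
          have htel := telescope_log 0 (m+1) (n+1) (by omega)
          push_cast at htel
          simp only [sub_zero] at htel
          rw [hIcc, ← htel]
          apply Finset.sum_le_sum
          intro j hj
          have hj1 : m + 1 ≤ j := (Finset.mem_Ico.mp hj).1
          have hj0 : (0:ℝ) < (j:ℝ) := by
            have : (1:ℝ) ≤ (j:ℝ) := by exact_mod_cast Nat.one_le_iff_ne_zero.mpr (by omega)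
            linarith
          have hfrac : (0:ℝ) < ((j:ℝ)+1) / (j:ℝ) := by positivity
          have hlog := Real.log_le_sub_one_of_pos hfrac
          rw [Real.log_div (by linarith) (ne_of_gt hj0)] at hlog
          have heq : ((j:ℝ)+1) / (j:ℝ) - 1 = ((j:ℝ))⁻¹ := by field_simp; ring
          linarith
        · push_neg at hmn
          have hIcc : Finset.Icc (m+1) n = ∅ := by
            apply Finset.Icc_eq_empty; omega
          rw [hIcc]
          simp only [Finset.sum_empty]
          have : Real.log ((n:ℝ)+1) ≤ Real.log ((m:ℝ)+1) := by
            apply Real.log_le_log (by positivity)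
            have : (n:ℝ) ≤ (m:ℝ) := by exact_mod_cast hmn.le
            linarith
          linarith
      calc (∏ j ∈ Finset.Icc (m+1) n, (1 - θ / (j:ℝ)))
          ≤ ∏ j ∈ Finset.Icc (m+1) n, Real.exp (-(θ / (j:ℝ))) := by
            apply Finset.prod_le_prod (hfac_nonneg n)
            intro j hj
            have := Real.add_one_le_exp (-(θ / (j:ℝ)))
            linarith
        _ = Real.exp (∑ j ∈ Finset.Icc (m+1) n, -(θ / (j:ℝ))) := (Real.exp_sum _ _).symm
        _ ≤ Real.exp (θ * Real.log ((m:ℝ)+1) - θ * Real.log ((n:ℝ)+1)) := by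
            apply Real.exp_le_exp.mpr
            have hrw : ∑ j ∈ Finset.Icc (m+1) n, -(θ / (j:ℝ))
                = -(θ * ∑ j ∈ Finset.Icc (m+1) n, ((j:ℝ))⁻¹) := by
              rw [Finset.mul_sum, ← Finset.sum_neg_distrib]
              exact Finset.sum_congr rfl fun j _ => by rw [div_eq_mul_inv]
            rw [hrw]
            nlinarith [hsumlog, hθ]
    -- bound on the sum of inverses
    have hS_le : ∀ n : ℕ, ∑ j ∈ Finset.Icc (m+1) n, ((j:ℝ) - θ)⁻¹
        ≤ 2 * Real.log ((n:ℝ)+1) := by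
      intro n
      by_cases hmn : m ≤ n
      · have hIcc : Finset.Icc (m+1) n = Finset.Ico (m+1) (n+1) := by
          rw [Finset.Ico_add_one_right_eq_Icc]
        have htel := telescope_log (m:ℝ) (m+1) (n+1) (by omega)
        push_cast at htel
        have hterm : ∀ j ∈ Finset.Ico (m+1) (n+1), ((j:ℝ) - θ)⁻¹
            ≤ 2 * (Real.log ((j:ℝ) + 1 - (m:ℝ)) - Real.log ((j:ℝ) - (m:ℝ))) := by
          intro j hj
          have hj1 : m + 1 ≤ j := (Finset.mem_Ico.mp hj).1
          have hk1 : (1:ℝ) ≤ (j:ℝ) - (m:ℝ) := by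
            have : (m:ℝ) + 1 ≤ (j:ℝ) := by exact_mod_cast hj1
            linarith
          set k : ℝ := (j:ℝ) - (m:ℝ) with hkdef
          have hk0 : (0:ℝ) < k := by linarith
          have hjθ : k ≤ (j:ℝ) - θ := by rw [hkdef]; linarith
          have hjθ0 : (0:ℝ) < (j:ℝ) - θ := lt_of_lt_of_le hk0 hjθ
          have hstep1 : ((j:ℝ) - θ)⁻¹ ≤ k⁻¹ := inv_anti₀ hk0 hjθ
          have hfrac : (0:ℝ) < (k+1)/k := by positivity
          have hlow := Real.one_sub_inv_le_log_of_pos hfrac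
          have hloginv : ((k+1)/k)⁻¹ = k/(k+1) := by rw [inv_div]
          have hlog_eq : Real.log ((k+1)/k) = Real.log (k+1) - Real.log k :=
            Real.log_div (by linarith) (ne_of_gt hk0)
          have h1 : 1 - k/(k+1) ≤ Real.log (k+1) - Real.log k := by
            rw [← hlog_eq, ← hloginv]; exact hlow
          have h2 : (1:ℝ) - k/(k+1) = 1/(k+1) := by field_simp; ring
          have h3 : k⁻¹ ≤ 2 * (1/(k+1)) := by
            have hk1' : (0:ℝ) < k + 1 := by linarith
            have h4 : k⁻¹ ≤ 2/(k+1) := by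
              rw [inv_eq_one_div, div_le_div_iff₀ hk0 hk1']
              nlinarith
            have h5 : (2:ℝ)/(k+1) = 2*(1/(k+1)) := by ring
            linarith
          have hcast : (j:ℝ) + 1 - (m:ℝ) = k + 1 := by rw [hkdef]; ring
          rw [hcast]
          calc ((j:ℝ) - θ)⁻¹ ≤ k⁻¹ := hstep1
            _ ≤ 2 * (1/(k+1)) := h3
            _ ≤ 2 * (Real.log (k+1) - Real.log k) := by linarith
        calc ∑ j ∈ Finset.Icc (m+1) n, ((j:ℝ) - θ)⁻¹
            ≤ ∑ j ∈ Finset.Ico (m+1) (n+1),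
                2 * (Real.log ((j:ℝ) + 1 - (m:ℝ)) - Real.log ((j:ℝ) - (m:ℝ))) := by
              rw [hIcc]
              exact Finset.sum_le_sum hterm
          _ = 2 * (Real.log ((n:ℝ) + 1 - (m:ℝ)) - Real.log ((m:ℝ) + 1 - (m:ℝ))) := by
              rw [← Finset.mul_sum, htel]
          _ ≤ 2 * Real.log ((n:ℝ)+1) := by
              have h5 : (m:ℝ) + 1 - (m:ℝ) = 1 := by ring
              rw [h5, Real.log_one, sub_zero]
              have hm0 : (0:ℝ) ≤ (m:ℝ) := Nat.cast_nonneg m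
              have hmn' : (m:ℝ) ≤ (n:ℝ) := by exact_mod_cast hmn
              have hpos : (0:ℝ) < (n:ℝ) + 1 - (m:ℝ) := by linarith
              have := Real.log_le_log hpos (by linarith : (n:ℝ) + 1 - (m:ℝ) ≤ (n:ℝ) + 1)
              linarith
      · push_neg at hmn
        have hIcc : Finset.Icc (m+1) n = ∅ := by apply Finset.Icc_eq_empty; omega
        rw [hIcc]
        simp only [Finset.sum_empty]
        have := hL_nonneg n
        linarith
    -- combine: bound c i n
    set u : ℕ → ℝ := fun n =>
      ((m:ℝ)+1) ^ θ * (((n:ℝ)+1) ^ (-θ)) * (θ * (2 * Real.log ((n:ℝ)+1))) ^ i with hu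
    have hc_nonneg : ∀ n : ℕ, 0 ≤ c i n := by
      intro n
      rw [hc]
      apply mul_nonneg (mul_nonneg (pow_nonneg hθ.le i) (hf_nonneg n))
      apply Finset.sum_nonneg
      intro s hs
      apply Finset.prod_nonneg
      intro l hl
      exact hinv_nonneg n l ((Finset.mem_powersetCard.mp hs).1 hl)
    have hc_le : ∀ n : ℕ, c i n ≤ u n := by
      intro n
      rw [hc, hu]
      have hS_nonneg : 0 ≤ ∑ j ∈ Finset.Icc (m+1) n, ((j:ℝ) - θ)⁻¹ :=
        Finset.sum_nonneg (hinv_nonneg n)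
      have hE_le : ∑ s ∈ Finset.powersetCard i (Finset.Icc (m+1) n), ∏ l ∈ s, ((l:ℝ) - θ)⁻¹
          ≤ (∑ j ∈ Finset.Icc (m+1) n, ((j:ℝ) - θ)⁻¹) ^ i :=
        esymm_le_pow_aux _ _ i (hinv_nonneg n)
      have hE_le2 : ∑ s ∈ Finset.powersetCard i (Finset.Icc (m+1) n), ∏ l ∈ s, ((l:ℝ) - θ)⁻¹
          ≤ (2 * Real.log ((n:ℝ)+1)) ^ i :=
        hE_le.trans (pow_le_pow_left₀ hS_nonneg (hS_le n) i)
      have hexp_eq : Real.exp (θ * Real.log ((m:ℝ)+1) - θ * Real.log ((n:ℝ)+1))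
          = ((m:ℝ)+1) ^ θ * (((n:ℝ)+1) ^ (-θ)) := by
        rw [Real.rpow_def_of_pos (by positivity : (0:ℝ) < (m:ℝ)+1),
          Real.rpow_def_of_pos (by positivity : (0:ℝ) < (n:ℝ)+1), ← Real.exp_add]
        congr 1
        ring
      calc θ ^ i * (∏ j ∈ Finset.Icc (m+1) n, (1 - θ / (j:ℝ))) *
            ∑ s ∈ Finset.powersetCard i (Finset.Icc (m+1) n), ∏ l ∈ s, ((l:ℝ) - θ)⁻¹
          ≤ θ ^ i * (∏ j ∈ Finset.Icc (m+1) n, (1 - θ / (j:ℝ)))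
              * (2 * Real.log ((n:ℝ)+1)) ^ i := by
            apply mul_le_mul_of_nonneg_left hE_le2
            exact mul_nonneg (pow_nonneg hθ.le i) (hf_nonneg n)
        _ ≤ θ ^ i * Real.exp (θ * Real.log ((m:ℝ)+1) - θ * Real.log ((n:ℝ)+1))
              * (2 * Real.log ((n:ℝ)+1)) ^ i := by
            apply mul_le_mul_of_nonneg_right _
              (pow_nonneg (mul_nonneg (by norm_num) (hL_nonneg n)) i)
            exact mul_le_mul_of_nonneg_left (hf_le n) (pow_nonneg hθ.le i)
        _ = ((m:ℝ)+1) ^ θ * (((n:ℝ)+1) ^ (-θ)) * (θ * (2 * Real.log ((n:ℝ)+1))) ^ i := by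
            rw [hexp_eq, mul_pow]
            ring
    -- the upper bound tends to 0
    have key : Tendsto (fun x : ℝ => Real.log x ^ i * x ^ (-θ)) atTop (nhds 0) := by
      have h := (isLittleO_log_rpow_rpow_atTop (i:ℝ) hθ).tendsto_div_nhds_zero
      refine h.congr' ?_
      filter_upwards [eventually_gt_atTop (0:ℝ)] with x hx
      rw [Real.rpow_natCast, Real.rpow_neg hx.le, div_eq_mul_inv]
    have comp : Tendsto (fun n : ℕ => ((n:ℝ)+1)) atTop atTop :=
      tendsto_atTop_add_const_right _ 1 tendsto_natCast_atTop_atTop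
    have key2 : Tendsto (fun n : ℕ => Real.log ((n:ℝ)+1) ^ i * ((n:ℝ)+1) ^ (-θ)) atTop
        (nhds 0) := key.comp comp
    have keyu : Tendsto u atTop (nhds 0) := by
      have h3 := key2.const_mul (((m:ℝ)+1) ^ θ * θ ^ i * 2 ^ i)
      rw [mul_zero] at h3
      refine h3.congr fun n => ?_
      simp only [hu]
      rw [mul_pow, mul_pow]
      ring
    exact squeeze_zero hc_nonneg hc_le keyu
  · -- part 2 : the coefficients sum to 1
    intro n hn
    have hcard : (Finset.Icc (m+1) n).card = n - m := by
      rw [Nat.card_Icc]; omega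
    calc ∑ i ∈ Finset.range (n - m + 1), c i n
        = ∑ i ∈ Finset.range (n - m + 1),
            ∑ s ∈ Finset.powersetCard i (Finset.Icc (m+1) n),
              (∏ j ∈ Finset.Icc (m+1) n, (1 - θ / (j:ℝ))) *
                ∏ l ∈ s, (θ * ((l:ℝ) - θ)⁻¹) := by
          refine Finset.sum_congr rfl fun i _ => ?_
          rw [hc, Finset.mul_sum]
          refine Finset.sum_congr rfl fun s hs => ?_
          rw [Finset.prod_mul_distrib, Finset.prod_const,
            (Finset.mem_powersetCard.mp hs).2]
          ring
      _ = ∑ s ∈ (Finset.Icc (m+1) n).powerset,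
            (∏ j ∈ Finset.Icc (m+1) n, (1 - θ / (j:ℝ))) *
              ∏ l ∈ s, (θ * ((l:ℝ) - θ)⁻¹) := by
          rw [Finset.sum_powerset, hcard]
      _ = (∏ j ∈ Finset.Icc (m+1) n, (1 - θ / (j:ℝ))) *
            ∑ s ∈ (Finset.Icc (m+1) n).powerset, ∏ l ∈ s, (θ * ((l:ℝ) - θ)⁻¹) := by
          rw [Finset.mul_sum]
      _ = (∏ j ∈ Finset.Icc (m+1) n, (1 - θ / (j:ℝ))) *
            ∏ l ∈ Finset.Icc (m+1) n, (θ * ((l:ℝ) - θ)⁻¹ + 1) := by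
          congr 1
          rw [Finset.prod_add]
          simp
      _ = ∏ l ∈ Finset.Icc (m+1) n, ((1 - θ / (l:ℝ)) * (θ * ((l:ℝ) - θ)⁻¹ + 1)) := by
          rw [Finset.prod_mul_distrib]
      _ = ∏ l ∈ Finset.Icc (m+1) n, (1:ℝ) := by
          refine Finset.prod_congr rfl fun l hl => ?_
          have h1 := hsub n l hl
          have hl0 : (l:ℝ) ≠ 0 := by
            have : (0:ℝ) < (l:ℝ) := by linarith
            exact ne_of_gt this
          have hlθ : (l:ℝ) - θ ≠ 0 := by
            have : (0:ℝ) < (l:ℝ) - θ := by linarith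
            exact ne_of_gt this
          field_simp; ring
      _ = 1 := Finset.prod_const_one
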